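/- arXiv:1412.6486 — 2 statements merged into one kernel-verified Lean document; each statement's English description precedes it below -/
import Mathlib

section
/- Under the hypotheses that u₁ is fixed with L₁(u₁) > 0, L₂(u₁) > 0, a₇ > 0, and 0 < u₂ < h(u₁) where h(u₁) = a₇/(log(√(L₂(u₁)/L₁(u₁))) - a₈) > 0, it holds that K₃(u₁, u₂) = L₁(u₁) - L₂(u₁)·exp(a₇/u₂ + a₈)^(-2) > 0. -/
/-- Below the steady-state curve (`0 < u₂ < h(u₁)`), `K₃(u₁,u₂) > 0`. -/
theorem stmt_7 (a₅ a₆ a₇ a₈ θc ε : ℝ) (u₁ u₂ : ℝ)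
    (ha₇ : 0 < a₇)
    (hL₁ : 0 < (a₅ - a₆ * u₁) / (1 + ε * u₁))
    (hL₂ : 0 < ((θc + u₁) / (1 - u₁)) ^ 2)
    (hden : Real.log (Real.sqrt ((((θc + u₁) / (1 - u₁)) ^ 2) /
        ((a₅ - a₆ * u₁) / (1 + ε * u₁)))) - a₈ > 0)
    (hu₂0 : 0 < u₂)
    (hu₂h : u₂ < a₇ / (Real.log (Real.sqrt ((((θc + u₁) / (1 - u₁)) ^ 2) /
        ((a₅ - a₆ * u₁) / (1 + ε * u₁)))) - a₈)) :
    0 < (a₅ - a₆ * u₁) / (1 + ε * u₁) -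
      ((θc + u₁) / (1 - u₁)) ^ 2 / (Real.exp (a₇ / u₂ + a₈)) ^ 2 := by
  set L₁ := (a₅ - a₆ * u₁) / (1 + ε * u₁) with hL₁def
  set L₂ := ((θc + u₁) / (1 - u₁)) ^ 2 with hL₂def
  have hr : 0 < L₂ / L₁ := div_pos hL₂ hL₁
  rw [Real.log_sqrt hr.le] at hden hu₂h
  have hD : Real.log (L₂ / L₁) / 2 - a₈ < a₇ / u₂ := by
    rw [lt_div_iff₀ hu₂0]
    calc (Real.log (L₂ / L₁) / 2 - a₈) * u₂
        < (Real.log (L₂ / L₁) / 2 - a₈) *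
          (a₇ / (Real.log (L₂ / L₁) / 2 - a₈)) := by
          exact mul_lt_mul_of_pos_left hu₂h hden
      _ = a₇ := mul_div_cancel₀ a₇ (ne_of_gt hden)
  have hlog : Real.log (L₂ / L₁) < 2 * (a₇ / u₂ + a₈) := by linarith
  have hlt : L₂ / L₁ < Real.exp (2 * (a₇ / u₂ + a₈)) := by
    rw [← Real.exp_log hr]
    exact Real.exp_lt_exp.mpr hlog
  have hE : (Real.exp (a₇ / u₂ + a₈)) ^ 2 = Real.exp (2 * (a₇ / u₂ + a₈)) := by
    rw [← Real.exp_nat_mul]; norm_num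
  rw [sub_pos, hE, div_lt_iff₀ (Real.exp_pos _)]
  rw [div_lt_iff₀ hL₁] at hlt
  linarith
end

section
/- Under the hypotheses that u₁ is fixed with L₁(u₁) > 0, L₂(u₁) > 0, a₇ > 0, and u₂ > h(u₁) > 0 where h(u₁) = a₇/(log(√(L₂(u₁)/L₁(u₁))) - a₈), it holds that K₃(u₁, u₂) = L₁(u₁) - L₂(u₁)·exp(a₇/u₂ + a₈)^(-2) < 0. -/
/-- Above the steady-state curve (`u₂ > h(u₁) > 0`), `K₃(u₁,u₂) < 0`. -/
theorem stmt_8 (a₅ a₆ a₇ a₈ θc ε : ℝ) (u₁ u₂ : ℝ)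
    (ha₇ : 0 < a₇)
    (hL₁ : 0 < (a₅ - a₆ * u₁) / (1 + ε * u₁))
    (hL₂ : 0 < ((θc + u₁) / (1 - u₁)) ^ 2)
    (hden : Real.log (Real.sqrt ((((θc + u₁) / (1 - u₁)) ^ 2) /
        ((a₅ - a₆ * u₁) / (1 + ε * u₁)))) - a₈ > 0)
    (hu₂h : u₂ > a₇ / (Real.log (Real.sqrt ((((θc + u₁) / (1 - u₁)) ^ 2) /
        ((a₅ - a₆ * u₁) / (1 + ε * u₁)))) - a₈)) :
    (a₅ - a₆ * u₁) / (1 + ε * u₁) -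
      ((θc + u₁) / (1 - u₁)) ^ 2 / (Real.exp (a₇ / u₂ + a₈)) ^ 2 < 0 := by
  set L₁ := (a₅ - a₆ * u₁) / (1 + ε * u₁) with hL1def
  set L₂ := ((θc + u₁) / (1 - u₁)) ^ 2 with hL2def
  have hlogsqrt : Real.log (Real.sqrt (L₂ / L₁)) = Real.log (L₂ / L₁) / 2 :=
    Real.log_sqrt (by positivity)
  have hu₂ : 0 < u₂ := lt_trans (div_pos ha₇ hden) hu₂h
  -- a₇ / u₂ < log √(L₂/L₁) - a₈
  have h1 : a₇ / u₂ < Real.log (Real.sqrt (L₂ / L₁)) - a₈ := by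
    rw [div_lt_iff₀ hu₂]
    calc a₇ = (a₇ / (Real.log (Real.sqrt (L₂ / L₁)) - a₈)) *
        (Real.log (Real.sqrt (L₂ / L₁)) - a₈) := (div_mul_cancel₀ _ (ne_of_gt hden)).symm
      _ < u₂ * (Real.log (Real.sqrt (L₂ / L₁)) - a₈) := by
          exact mul_lt_mul_of_pos_right hu₂h hden
      _ = (Real.log (Real.sqrt (L₂ / L₁)) - a₈) * u₂ := mul_comm _ _
  have h2 : 2 * (a₇ / u₂ + a₈) < Real.log (L₂ / L₁) := by
    rw [hlogsqrt] at h1; linarith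
  have h3 : Real.exp (2 * (a₇ / u₂ + a₈)) < L₂ / L₁ := by
    calc Real.exp (2 * (a₇ / u₂ + a₈)) < Real.exp (Real.log (L₂ / L₁)) :=
      Real.exp_lt_exp.mpr h2
      _ = L₂ / L₁ := Real.exp_log (by positivity)
  have hexpsq : (Real.exp (a₇ / u₂ + a₈)) ^ 2 = Real.exp (2 * (a₇ / u₂ + a₈)) := by
    rw [← Real.exp_nat_mul]; norm_num
  rw [hexpsq, sub_neg]
  rw [lt_div_iff₀ (Real.exp_pos _)]
  have := (lt_div_iff₀ hL₁).mp h3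
  linarith [this]
end
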